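/- arXiv:math/0510611 — 2 statements merged into one kernel-verified Lean document; each statement's English description precedes it below -/
import Mathlib

section
/- For positive reals p_1,…,p_m in (0,1), the 2m×2m block matrix C_2 = [[C_{1,1}, C_{1,2}],[C_{2,1}, C_{2,2}^2]] is positive definite, where C_{2,2}^2 has diagonal entries 2m(1+p_j)^2/(m+1) and off-diagonal entries −2(1+p_j)(1+p_k)/(m+1); its r-th leading principal minor for m+1 ≤ r ≤ 2m equals [p_1⋯p_m (1+p_1)⋯(1+p_{r−m})]^2 (2m+1−r). -/
open Matrix
namespace S5
noncomputable section

def J (n : ℕ) : Matrix (Fin n) (Fin n) ℝ := Matrix.of fun _ _ => 1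

lemma J_mul_J (n : ℕ) : J n * J n = (n : ℝ) • J n := by
  ext i j; simp [J, Matrix.mul_apply]

lemma J_conj (n : ℕ) : (J n)ᴴ = J n := by
  ext i j; simp [J]

lemma J_transpose (n : ℕ) : (J n)ᵀ = J n := by
  ext i j; simp [J]

lemma prod_poly (n : ℕ) (a b c d : ℝ) :
    (a • 1 + b • J n) * (c • 1 + d • J n)
      = (a*c) • (1 : Matrix (Fin n) (Fin n) ℝ) + (a*d + b*c + b*d*n) • J n := by
  rw [add_mul, mul_add, mul_add, smul_mul_smul_comm, smul_mul_smul_comm,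
    smul_mul_smul_comm, smul_mul_smul_comm, one_mul, mul_one, one_mul, J_mul_J,
    smul_smul]
  module

end
end S5
namespace S5
noncomputable section
open Matrix

lemma one_add_J_eq (n : ℕ) : (1 : Matrix (Fin n) (Fin n) ℝ) + J n = (1:ℝ) • 1 + (1:ℝ) • J n := by
  simp

lemma one_sub_smul_J_eq (n : ℕ) (c : ℝ) :
    (1 : Matrix (Fin n) (Fin n) ℝ) - c • J n = (1:ℝ) • 1 + (-c) • J n := by
  simp [sub_eq_add_neg]

lemma inv_c (n : ℕ) : ((n:ℝ)+1)⁻¹ * ((n:ℝ)+1) = 1 := by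
  have : ((n:ℝ)+1) ≠ 0 := by positivity
  field_simp

lemma mul_inv_J (n : ℕ) :
    ((1 : Matrix (Fin n) (Fin n) ℝ) + J n) * (1 - ((n:ℝ)+1)⁻¹ • J n) = 1 := by
  set c := ((n:ℝ)+1)⁻¹ with hc
  rw [one_add_J_eq, one_sub_smul_J_eq, prod_poly]
  have h1 : (1:ℝ) * (-c) + 1 * 1 + 1 * (-c) * n = 0 := by
    have := inv_c n; nlinarith [this]
  rw [h1]; simp

lemma inv_mul_J (n : ℕ) :
    ((1 : Matrix (Fin n) (Fin n) ℝ) - ((n:ℝ)+1)⁻¹ • J n) * (1 + J n) = 1 := by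
  set c := ((n:ℝ)+1)⁻¹ with hc
  rw [one_add_J_eq, one_sub_smul_J_eq, prod_poly]
  have h1 : (1:ℝ) * 1 + (-c) * 1 + (-c) * 1 * n = 0 := by
    have := inv_c n; nlinarith [this]
  rw [h1]; simp

lemma qf_J (n : ℕ) (x : Fin n → ℝ) : x ⬝ᵥ (J n *ᵥ x) = (∑ i, x i) ^ 2 := by
  simp only [dotProduct, mulVec, J, Finset.mul_sum, sq, Finset.sum_mul, Matrix.of_apply, mul_one]
  exact Finset.sum_congr rfl fun _ _ => Finset.sum_congr rfl fun _ _ => by ring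

lemma qf_one (n : ℕ) (x : Fin n → ℝ) : x ⬝ᵥ ((1 : Matrix (Fin n) (Fin n) ℝ) *ᵥ x) = ∑ i, x i ^ 2 := by
  simp [dotProduct, sq]

lemma sum_sq_pos {n : ℕ} {x : Fin n → ℝ} (hx : x ≠ 0) : 0 < ∑ i, x i ^ 2 := by
  rcases Function.ne_iff.mp hx with ⟨i, hi⟩
  have : 0 < x i ^ 2 := lt_of_le_of_ne (sq_nonneg _) (Ne.symm (pow_ne_zero 2 hi))
  exact lt_of_lt_of_le this (Finset.single_le_sum (fun j _ => sq_nonneg (x j)) (Finset.mem_univ i))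

lemma posDef_one_add_J (n : ℕ) : ((1 : Matrix (Fin n) (Fin n) ℝ) + J n).PosDef := by
  refine posDef_iff_dotProduct_mulVec.mpr ⟨?_, fun x hx => ?_⟩
  · simp [Matrix.IsHermitian, conjTranspose_add, J_conj, J_transpose]
  · have : star x = x := star_trivial x
    rw [this, add_mulVec, dotProduct_add, qf_one, qf_J]
    have := sum_sq_pos hx
    nlinarith [sq_nonneg (∑ i, x i)]

lemma posDef_one_sub_smul_J (n : ℕ) :
    ((1 : Matrix (Fin n) (Fin n) ℝ) - ((n:ℝ)+1)⁻¹ • J n).PosDef := by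
  set c := ((n:ℝ)+1)⁻¹ with hc
  have hc0 : 0 ≤ c := by positivity
  refine posDef_iff_dotProduct_mulVec.mpr ⟨?_, fun x hx => ?_⟩
  · simp [Matrix.IsHermitian, conjTranspose_sub, conjTranspose_smul, J_conj, J_transpose]
  · have hst : star x = x := star_trivial x
    rw [hst, sub_mulVec, dotProduct_sub, qf_one, smul_mulVec, dotProduct_smul, qf_J]
    have hcs : (∑ i, x i) ^ 2 ≤ (n:ℝ) * ∑ i, x i ^ 2 := by
      simpa using sq_sum_le_card_mul_sum_sq (s := Finset.univ) (f := x)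
    have hpos := sum_sq_pos hx
    have h1 : c * (n:ℝ) < 1 := by
      have hn : (0:ℝ) < (n:ℝ)+1 := by positivity
      rw [hc]
      rw [inv_mul_lt_iff₀ hn]
      nlinarith
    have : c * (∑ i, x i)^2 ≤ c * ((n:ℝ) * ∑ i, x i ^ 2) := by
      exact mul_le_mul_of_nonneg_left hcs hc0
    calc (0:ℝ) < (1 - c * n) * ∑ i, x i ^ 2 := by nlinarith
    _ ≤ ∑ i, x i ^2 - c • (∑ i, x i)^2 := by simp [smul_eq_mul]; nlinarith
lemma conj_diag_apply {n : ℕ} (d : Fin n → ℝ) (M : Matrix (Fin n) (Fin n) ℝ) (i j : Fin n) :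
    (diagonal d * M * diagonal d) i j = d i * M i j * d j := by
  rw [Matrix.mul_apply]
  simp [Matrix.diagonal_mul, Matrix.mul_diagonal, Matrix.diagonal_apply, Finset.sum_ite_eq',
    Matrix.mul_apply]

lemma dot_diag {n : ℕ} (d x z : Fin n → ℝ) :
    x ⬝ᵥ ((diagonal d) *ᵥ z) = (d * x) ⬝ᵥ z := by
  simp only [dotProduct, mulVec_diagonal, Pi.mul_apply]
  exact Finset.sum_congr rfl fun _ _ => by ring

lemma diag_mulVec {n : ℕ} (d x : Fin n → ℝ) : (diagonal d) *ᵥ x = d * x := by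
  ext i; simp [mulVec_diagonal]

lemma posDef_conj_diag {n : ℕ} {d : Fin n → ℝ} (hd : ∀ i, d i ≠ 0)
    {M : Matrix (Fin n) (Fin n) ℝ} (hM : M.PosDef) :
    (diagonal d * M * diagonal d).PosDef := by
  refine posDef_iff_dotProduct_mulVec.mpr ⟨?_, fun x hx => ?_⟩
  · have h1 : (diagonal d)ᴴ = diagonal d := by
      rw [diagonal_conjTranspose]; simp
    unfold Matrix.IsHermitian
    rw [conjTranspose_mul, conjTranspose_mul, h1, hM.1.eq, Matrix.mul_assoc]
  · have hst : star x = x := star_trivial x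
    have hy : d * x ≠ 0 := by
      rcases Function.ne_iff.mp hx with ⟨i, hi⟩
      intro h
      have := congrFun h i
      simp only [Pi.mul_apply, Pi.zero_apply] at this
      exact hi ((mul_eq_zero.mp this).resolve_left (hd i))
    have key : star x ⬝ᵥ ((diagonal d * M * diagonal d) *ᵥ x)
        = star (d * x) ⬝ᵥ (M *ᵥ (d * x)) := by
      rw [hst, star_trivial, ← Matrix.mulVec_mulVec, ← Matrix.mulVec_mulVec, dot_diag,
        diag_mulVec]
    rw [key]
    exact hM.dotProduct_mulVec_pos hy

lemma det_conj_diag {n : ℕ} (d : Fin n → ℝ) (M : Matrix (Fin n) (Fin n) ℝ) :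
    (diagonal d * M * diagonal d).det = (∏ i, d i) ^ 2 * M.det := by
  rw [det_mul, det_mul, det_diagonal]; ring

lemma posDef_of_posSemidef_det {n : Type*} [Fintype n] [DecidableEq n] {M : Matrix n n ℝ}
    (h1 : M.PosSemidef) (h2 : M.det ≠ 0) : M.PosDef := by
  refine posDef_iff_dotProduct_mulVec.mpr ⟨h1.1, fun x hx => ?_⟩
  rcases lt_or_eq_of_le (h1.dotProduct_mulVec_nonneg x) with h | h
  · exact h
  · exfalso
    have h0 : M *ᵥ x = 0 := (h1.dotProduct_mulVec_zero_iff x).mp h.symm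
    have : x = 0 := by
      have := congrArg (fun v => M⁻¹ *ᵥ v) h0
      simpa [Matrix.mulVec_mulVec, Matrix.nonsing_inv_mul M (isUnit_iff_ne_zero.mpr h2)]
        using this
    exact hx this

end
end S5

namespace S5
noncomputable section
open Matrix

variable (m : ℕ) (p : Fin m → ℝ)

abbrev MA : Matrix (Fin m) (Fin m) ℝ :=
  Matrix.of fun j k : Fin m => if j = k then 2 * p j ^ 2 else p j * p k

abbrev MB : Matrix (Fin m) (Fin m) ℝ :=
  Matrix.diagonal fun j => -(p j * (1 + p j))

abbrev MD : Matrix (Fin m) (Fin m) ℝ :=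
  Matrix.of fun j k : Fin m =>
    if j = k then 2 * m * (1 + p j) ^ 2 / (m + 1)
    else -2 * (1 + p j) * (1 + p k) / (m + 1)

abbrev G2 : Matrix (Fin m) (Fin m) ℝ := 1 - ((m:ℝ)+1)⁻¹ • J m

abbrev MA' : Matrix (Fin m) (Fin m) ℝ :=
  diagonal (fun j => (p j)⁻¹) * G2 m * diagonal (fun j => (p j)⁻¹)

lemma MA_eq : MA m p = diagonal p * (1 + J m) * diagonal p := by
  ext i j
  rw [conj_diag_apply]
  by_cases h : i = j
  · subst h; simp [J, Matrix.one_apply]; ring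
  · simp [J, Matrix.one_apply, h]

lemma MD_eq : MD m p = diagonal (fun j => 1 + p j) * ((2:ℝ) • G2 m) * diagonal (fun j => 1 + p j) := by
  have hm1 : ((m:ℝ)+1) ≠ 0 := by positivity
  ext i j
  rw [conj_diag_apply]
  by_cases h : i = j
  · subst h
    simp only [MD, Matrix.of_apply, if_pos rfl, G2, Matrix.smul_apply, Matrix.sub_apply,
      Matrix.one_apply_eq, Matrix.smul_apply, J, Matrix.of_apply, smul_eq_mul]
    simp only [eq_self_iff_true, if_true]
    field_simp
    ring
  · simp only [MD, Matrix.of_apply, if_neg h, G2, Matrix.smul_apply, Matrix.sub_apply,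
      Matrix.one_apply_ne h, Matrix.smul_apply, J, Matrix.of_apply, smul_eq_mul]
    rw [div_eq_mul_inv]
    ring

lemma conj_mul_conj {n : ℕ} (d e : Fin n → ℝ) (X Y : Matrix (Fin n) (Fin n) ℝ)
    (h : ∀ i, d i * e i = 1) :
    (diagonal d * X * diagonal d) * (diagonal e * Y * diagonal e)
      = diagonal d * (X * Y) * diagonal e := by
  have hde : diagonal d * diagonal e = 1 := by
    rw [diagonal_mul_diagonal]
    have : (fun i => d i * e i) = fun _ => (1:ℝ) := funext h
    rw [this, diagonal_one]
  calc (diagonal d * X * diagonal d) * (diagonal e * Y * diagonal e)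
      = diagonal d * X * ((diagonal d * diagonal e) * (Y * diagonal e)) := by
        simp only [Matrix.mul_assoc]
    _ = diagonal d * (X * Y) * diagonal e := by
        rw [hde, Matrix.one_mul]; simp only [Matrix.mul_assoc]

end
end S5

namespace S5
noncomputable section
open Matrix

lemma det_one_add_J (n : ℕ) : ((1 : Matrix (Fin n) (Fin n) ℝ) + J n).det = n + 1 := by
  have hJ : J n = replicateCol Unit (fun _ => (1:ℝ)) * replicateRow Unit (fun _ => (1:ℝ)) := by
    ext i j; simp [J, Matrix.mul_apply]
  rw [hJ, det_one_add_replicateCol_mul_replicateRow]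
  simp [dotProduct]
  ring

lemma det_one_sub_smul_J (n : ℕ) (c : ℝ) :
    ((1 : Matrix (Fin n) (Fin n) ℝ) - c • J n).det = 1 - c * n := by
  have hJ : -(c • J n) = replicateCol Unit (fun _ => (-c:ℝ)) * replicateRow Unit (fun _ => (1:ℝ)) := by
    ext i j; simp [J, Matrix.mul_apply]
  rw [sub_eq_add_neg, hJ, det_one_add_replicateCol_mul_replicateRow]
  simp [dotProduct]
  ring

variable {m : ℕ} {p : Fin m → ℝ}

lemma MA_mul_MA' (hp : ∀ j, 0 < p j) : MA m p * MA' m p = 1 := by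
  rw [MA_eq, MA', conj_mul_conj _ _ _ _ (fun i => mul_inv_cancel₀ (hp i).ne'),
    mul_inv_J, Matrix.mul_one, diagonal_mul_diagonal]
  convert diagonal_one with j
  exact mul_inv_cancel₀ (hp j).ne'

lemma MA'_mul_MA (hp : ∀ j, 0 < p j) : MA' m p * MA m p = 1 := by
  rw [MA_eq, MA', conj_mul_conj _ _ _ _ (fun i => inv_mul_cancel₀ (hp i).ne'),
    inv_mul_J, Matrix.mul_one, diagonal_mul_diagonal]
  convert diagonal_one with j
  exact inv_mul_cancel₀ (hp j).ne'

lemma MA_posDef (hp : ∀ j, 0 < p j) : (MA m p).PosDef := by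
  rw [MA_eq]
  exact posDef_conj_diag (fun i => (hp i).ne') (posDef_one_add_J m)

lemma schur_full (hp : ∀ j, 0 < p j) :
    MD m p - MB m p * MA' m p * MB m p
      = diagonal (fun j => 1 + p j) * G2 m * diagonal (fun j => 1 + p j) := by
  have e1 : (fun j => -(p j * (1 + p j)) * (p j)⁻¹) = fun j => -(1 + p j) := by
    funext j
    rw [neg_mul]; congr 1
    rw [mul_comm (p j), mul_assoc, mul_inv_cancel₀ (hp j).ne', mul_one]
  have e2 : (fun j => (p j)⁻¹ * -(p j * (1 + p j))) = fun j => -(1 + p j) := by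
    funext j
    rw [mul_neg]; congr 1
    rw [← mul_assoc, inv_mul_cancel₀ (hp j).ne', one_mul]
  have hb1 : MB m p * diagonal (fun j => (p j)⁻¹) = diagonal (fun j => -(1 + p j)) := by
    rw [MB, diagonal_mul_diagonal, e1]
  have hb2 : diagonal (fun j : Fin m => (p j)⁻¹) * MB m p = diagonal (fun j => -(1 + p j)) := by
    rw [MB, diagonal_mul_diagonal, e2]
  have key : MB m p * MA' m p * MB m p
      = diagonal (fun j => 1 + p j) * G2 m * diagonal (fun j => 1 + p j) := by
    calc MB m p * MA' m p * MB m p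
        = (MB m p * diagonal (fun j => (p j)⁻¹)) * G2 m *
            (diagonal (fun j : Fin m => (p j)⁻¹) * MB m p) := by
          simp only [MA', Matrix.mul_assoc]
      _ = diagonal (fun j => -(1 + p j)) * G2 m * diagonal (fun j => -(1 + p j)) := by
          rw [hb1, hb2]
      _ = diagonal (fun j => 1 + p j) * G2 m * diagonal (fun j => 1 + p j) := by
          have hneg : diagonal (fun j : Fin m => -(1 + p j))
              = -diagonal (fun j => 1 + p j) := by
            rw [← diagonal_neg]
          rw [hneg, Matrix.neg_mul, Matrix.neg_mul, Matrix.mul_neg, neg_neg]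
  rw [MD_eq, key, two_smul]
  rw [Matrix.mul_add, Matrix.add_mul, add_sub_cancel_right]

lemma schur_posDef (hp : ∀ j, 0 < p j) (hp1 : ∀ j, p j < 1) :
    (diagonal (fun j : Fin m => 1 + p j) * G2 m * diagonal (fun j => 1 + p j)).PosDef := by
  refine posDef_conj_diag (fun i => ?_) (posDef_one_sub_smul_J m)
  nlinarith [hp i]

end
end S5

namespace S5
noncomputable section
open Matrix

variable {m : ℕ} {p : Fin m → ℝ}

lemma MB_conjTranspose : (MB m p)ᴴ = MB m p := by
  rw [MB, diagonal_conjTranspose]; simp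

lemma MA_det : (MA m p).det = (∏ j, p j)^2 * ((m:ℝ)+1) := by
  rw [MA_eq, det_conj_diag, det_one_add_J]

lemma fromBlocks_posDef (hp : ∀ j, 0 < p j) (hp1 : ∀ j, p j < 1) :
    (fromBlocks (MA m p) (MB m p) (MB m p) (MD m p)).PosDef := by
  letI : Invertible (MA m p) := ⟨MA' m p, MA'_mul_MA hp, MA_mul_MA' hp⟩
  have hAinv : (MA m p)⁻¹ = MA' m p := inv_eq_left_inv (MA'_mul_MA hp)
  have hApos := MA_posDef hp
  have hSchurPD : (MD m p - (MB m p)ᴴ * (MA m p)⁻¹ * MB m p).PosDef := by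
    rw [MB_conjTranspose, hAinv, schur_full hp]
    exact schur_posDef hp hp1
  have hPSD : (fromBlocks (MA m p) (MB m p) (MB m p) (MD m p)).PosSemidef := by
    have := (PosDef.fromBlocks₁₁ (MB m p) (MD m p) hApos).mpr hSchurPD.posSemidef
    rwa [MB_conjTranspose] at this
  refine posDef_of_posSemidef_det hPSD ?_
  have hdet : (fromBlocks (MA m p) (MB m p) (MB m p) (MD m p)).det
      = (MA m p).det * (MD m p - MB m p * ⅟(MA m p) * MB m p).det :=
    det_fromBlocks₁₁ _ _ _ _
  have hinvOf : ⅟(MA m p) = MA' m p := rfl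
  rw [hdet, hinvOf, schur_full hp]
  exact (mul_pos hApos.det_pos (schur_posDef hp hp1).det_pos).ne'

lemma det_block (hp : ∀ j, 0 < p j) (t : ℕ) (ht : t ≤ m) :
    (fromBlocks (MA m p) ((MB m p).submatrix id (Fin.castLE ht))
      ((MB m p).submatrix (Fin.castLE ht) id)
      ((MD m p).submatrix (Fin.castLE ht) (Fin.castLE ht))).det
      = ((∏ j, p j) * ∏ j : Fin t, (1 + p (Fin.castLE ht j))) ^ 2 * ((m:ℝ) + 1 - t) := by
  letI : Invertible (MA m p) := ⟨MA' m p, MA'_mul_MA hp, MA_mul_MA' hp⟩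
  rw [det_fromBlocks₁₁]
  have hinvOf : ⅟(MA m p) = MA' m p := rfl
  rw [hinvOf]
  set g : Fin t → Fin m := Fin.castLE ht with hg
  have h1 : (MB m p).submatrix g id * MA' m p = (MB m p * MA' m p).submatrix g id := by
    ext i j; simp [Matrix.mul_apply]
  have h2 : (MB m p * MA' m p).submatrix g id * (MB m p).submatrix id g
      = (MB m p * MA' m p * MB m p).submatrix g g := by
    ext i j; simp [Matrix.mul_apply]
  have h3 : (MD m p).submatrix g g - (MB m p * MA' m p * MB m p).submatrix g g
      = (MD m p - MB m p * MA' m p * MB m p).submatrix g g := by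
    ext i j; simp
  have h5 : ((diagonal (fun j : Fin m => 1 + p j)) * G2 m *
        (diagonal (fun j : Fin m => 1 + p j))).submatrix g g
      = diagonal (fun j : Fin t => 1 + p (g j)) * (1 - ((m:ℝ)+1)⁻¹ • J t) *
          diagonal (fun j : Fin t => 1 + p (g j)) := by
    ext i j
    rw [submatrix_apply, conj_diag_apply, conj_diag_apply]
    by_cases h : i = j
    · subst h; simp [G2, J, Matrix.one_apply]
    · have hgij : g i ≠ g j := fun hc => h (Fin.castLE_injective ht hc)
      simp [G2, J, Matrix.one_apply, h, hgij]
  rw [h1, h2, h3, schur_full hp, h5, det_conj_diag, det_one_sub_smul_J, MA_det]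
  have hm1 : ((m:ℝ)+1) ≠ 0 := by positivity
  field_simp

end
end S5

open Matrix

theorem stmt_5 (m : ℕ) (hm : 1 ≤ m) (p : Fin m → ℝ)
    (hp : ∀ j, 0 < p j) (hp1 : ∀ j, p j < 1) :
    (Matrix.fromBlocks
        (Matrix.of fun j k : Fin m => if j = k then 2 * p j ^ 2 else p j * p k)
        (Matrix.diagonal fun j => -(p j * (1 + p j)))
        (Matrix.diagonal fun j => -(p j * (1 + p j)))
        (Matrix.of fun j k : Fin m =>
          if j = k then 2 * m * (1 + p j) ^ 2 / (m + 1)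
          else -2 * (1 + p j) * (1 + p k) / (m + 1))).PosDef ∧
    ∀ (r : ℕ) (h1 : m + 1 ≤ r) (h2 : r ≤ m + m) (h3 : r - m ≤ m),
      (((Matrix.fromBlocks
          (Matrix.of fun j k : Fin m => if j = k then 2 * p j ^ 2 else p j * p k)
          (Matrix.diagonal fun j => -(p j * (1 + p j)))
          (Matrix.diagonal fun j => -(p j * (1 + p j)))
          (Matrix.of fun j k : Fin m =>
            if j = k then 2 * m * (1 + p j) ^ 2 / (m + 1)
            else -2 * (1 + p j) * (1 + p k) / (m + 1))).submatrix
            finSumFinEquiv.symm finSumFinEquiv.symm).submatrix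
          (Fin.castLE h2) (Fin.castLE h2)).det =
        ((∏ j, p j) * ∏ j : Fin (r - m), (1 + p (Fin.castLE h3 j))) ^ 2 *
          ((2 * m + 1 : ℝ) - r) := by
  constructor
  · exact S5.fromBlocks_posDef hp hp1
  · intro r h1 h2 h3
    set t := r - m with htdef
    have hmt : m + t = r := by omega
    set e := (finSumFinEquiv.trans (finCongr hmt) : Fin m ⊕ Fin t ≃ Fin r) with he
    have cast1 : ∀ j : Fin m, finSumFinEquiv.symm (Fin.castLE h2 (e (Sum.inl j))) = Sum.inl j := by
      intro j
      have hv : Fin.castLE h2 (e (Sum.inl j)) = Fin.castAdd m j := by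
        apply Fin.ext
        simp [he, finSumFinEquiv_apply_left]
      rw [hv, finSumFinEquiv_symm_apply_castAdd]
    have cast2 : ∀ j : Fin t, finSumFinEquiv.symm (Fin.castLE h2 (e (Sum.inr j)))
        = Sum.inr (Fin.castLE h3 j) := by
      intro j
      have hv : Fin.castLE h2 (e (Sum.inr j)) = Fin.natAdd m (Fin.castLE h3 j) := by
        apply Fin.ext
        simp [he, finSumFinEquiv_apply_right]
        omega
      rw [hv, finSumFinEquiv_symm_apply_natAdd]
    rw [← Matrix.det_submatrix_equiv_self e]
    have key : (((Matrix.fromBlocks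
          (Matrix.of fun j k : Fin m => if j = k then 2 * p j ^ 2 else p j * p k)
          (Matrix.diagonal fun j => -(p j * (1 + p j)))
          (Matrix.diagonal fun j => -(p j * (1 + p j)))
          (Matrix.of fun j k : Fin m =>
            if j = k then 2 * m * (1 + p j) ^ 2 / (m + 1)
            else -2 * (1 + p j) * (1 + p k) / (m + 1))).submatrix
            finSumFinEquiv.symm finSumFinEquiv.symm).submatrix
          (Fin.castLE h2) (Fin.castLE h2)).submatrix e e
        = fromBlocks (S5.MA m p) ((S5.MB m p).submatrix id (Fin.castLE h3))
            ((S5.MB m p).submatrix (Fin.castLE h3) id)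
            ((S5.MD m p).submatrix (Fin.castLE h3) (Fin.castLE h3)) := by
      ext i j
      rcases i with i | i <;> rcases j with j | j <;>
        simp only [submatrix_apply, cast1, cast2, fromBlocks_apply₁₁, fromBlocks_apply₁₂,
          fromBlocks_apply₂₁, fromBlocks_apply₂₂, id_eq, S5.MA, S5.MB, S5.MD]
    rw [key, S5.det_block hp t h3]
    have hc : (t:ℝ) = (r:ℝ) - (m:ℝ) := by
      rw [htdef, Nat.cast_sub (by omega : m ≤ r)]
    rw [hc]
    ring
end

section
/- If (Q_n, P_{n,1}, …, P_{n,m}) and (Q̃_n, P̃_{n,1}, …, P̃_{n,m}) are two solutions of the linear Fourier–Padé conditions with Q_n and Q̃_n monic of exact degree |n|, then Q_n = Q̃_n and P_{n,j} = P̃_{n,j} for all j; i.e., the linear Fourier–Padé approximant is unique. -/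
open MeasureTheory Polynomial

/-- The Cauchy transform of a finite measure is measurable. -/
lemma cauchy_meas (ν : Measure ℝ) [IsFiniteMeasure ν] :
    Measurable fun x : ℝ => ∫ t, (x - t)⁻¹ ∂ν := by
  have : StronglyMeasurable fun p : ℝ × ℝ => (p.1 - p.2)⁻¹ :=
    ((measurable_fst.sub measurable_snd).inv).stronglyMeasurable
  exact this.integral_prod_right'.measurable

/-- A continuous function is integrable w.r.t. a finite measure vanishing off a compact set. -/
lemma cont_int (μ : Measure ℝ) [IsFiniteMeasure μ] (S : Set ℝ) (hμ : μ Sᶜ = 0)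
    (hS : IsCompact S) (g : ℝ → ℝ) (hg : Continuous g) : Integrable g μ := by
  obtain ⟨C, hC⟩ : ∃ C, ∀ x ∈ S, ‖g x‖ ≤ C := by
    rcases S.eq_empty_or_nonempty with h | h
    · exact ⟨0, by simp [h]⟩
    · exact hS.exists_bound_of_continuousOn (hg.continuousOn (s := S))
  have haeS : ∀ᵐ x ∂μ, x ∈ S := by rw [ae_iff]; exact hμ
  exact Integrable.mono' (integrable_const C) hg.measurable.aestronglyMeasurable
    (by filter_upwards [haeS] with x hx using hC x hx)

/-- Integrability of `g · ν̂` when the supports are separated by a positive gap. -/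
lemma cauchy_int (μ ν : Measure ℝ) [IsFiniteMeasure μ] [IsFiniteMeasure ν]
    (S T : Set ℝ) (hμ : μ Sᶜ = 0) (hν : ν Tᶜ = 0) (hS : IsCompact S)
    (g : ℝ → ℝ) (hg : Continuous g)
    (gap : ℝ) (hgap : 0 < gap) (hdist : ∀ x ∈ S, ∀ t ∈ T, gap ≤ |x - t|) :
    Integrable (fun x => g x * ∫ t, (x - t)⁻¹ ∂ν) μ := by
  obtain ⟨C, hC⟩ : ∃ C, ∀ x ∈ S, ‖g x‖ ≤ C := by
    rcases S.eq_empty_or_nonempty with h | h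
    · exact ⟨0, by simp [h]⟩
    · exact hS.exists_bound_of_continuousOn (hg.continuousOn (s := S))
  have haeS : ∀ᵐ x ∂μ, x ∈ S := by rw [ae_iff]; exact hμ
  have haeT : ∀ᵐ t ∂ν, t ∈ T := by rw [ae_iff]; exact hν
  have hbound : ∀ᵐ x ∂μ, ‖g x * ∫ t, (x - t)⁻¹ ∂ν‖ ≤ C * (gap⁻¹ * (ν Set.univ).toReal) := by
    filter_upwards [haeS] with x hx
    rw [norm_mul]
    have h1 : ‖∫ t, (x - t)⁻¹ ∂ν‖ ≤ gap⁻¹ * (ν Set.univ).toReal := by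
      apply norm_integral_le_of_norm_le_const
      filter_upwards [haeT] with t ht
      rw [Real.norm_eq_abs, abs_inv]
      exact inv_anti₀ hgap (hdist x hx t ht)
    exact mul_le_mul (hC x hx) h1 (norm_nonneg _) (le_trans (norm_nonneg _) (hC x hx))
  exact Integrable.mono' (integrable_const _)
    (hg.measurable.mul (cauchy_meas ν)).aestronglyMeasurable hbound

/-- Two disjoint nondegenerate closed intervals are separated by a positive gap. -/
lemma gap_lemma {a b c d : ℝ} (hab : a < b) (hcd : c < d)
    (h : Disjoint (Set.Icc a b) (Set.Icc c d)) :
    ∃ gap > 0, ∀ x ∈ Set.Icc a b, ∀ t ∈ Set.Icc c d, gap ≤ |x - t| := by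
  rcases lt_or_ge b c with h1 | h1
  · refine ⟨c - b, by linarith, fun x hx t ht => ?_⟩
    rw [abs_sub_comm, abs_of_nonneg (by linarith [hx.2, ht.1])]
    linarith [hx.2, ht.1]
  · have h2 : d < a := by
      by_contra h2
      push_neg at h2
      have hmem : max a c ∈ Set.Icc a b ∩ Set.Icc c d := by
        constructor
        · exact ⟨le_max_left _ _, max_le hab.le h1⟩
        · exact ⟨le_max_right _ _, max_le h2 hcd.le⟩
      exact (h.ne_of_mem hmem.1 hmem.2) rfl
    refine ⟨a - d, by linarith, fun x hx t ht => ?_⟩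
    rw [abs_of_nonneg (by linarith [hx.1, ht.2])]
    linarith [hx.1, ht.2]

theorem stmt_16 (m : ℕ) (hm : 1 ≤ m) (n : Fin m → ℕ) (N : ℕ) (hN : N = ∑ j, n j)
    (Δ0 : Set ℝ) (Δ : Fin m → Set ℝ)
    (hΔ0 : ∃ a b : ℝ, a < b ∧ Δ0 = Set.Icc a b)
    (hΔ : ∀ j, ∃ a b : ℝ, a < b ∧ Δ j = Set.Icc a b)
    (hd0 : ∀ j, Disjoint Δ0 (Δ j)) (hdd : ∀ j k, j ≠ k → Disjoint (Δ j) (Δ k))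
    (σ0 : Measure ℝ) [IsFiniteMeasure σ0] (hσ0 : σ0 Δ0ᶜ = 0)
    (σ : Fin m → Measure ℝ) [∀ j, IsFiniteMeasure (σ j)]
    (hσ : ∀ j, σ j (Δ j)ᶜ = 0)
    -- orthonormal polynomials with respect to σ0, with positive leading coefficient
    (ℓ : ℕ → Polynomial ℝ) (hldeg : ∀ k, (ℓ k).natDegree = k)
    (hlead : ∀ k, 0 < (ℓ k).leadingCoeff)
    (horthon : ∀ k i, ∫ x, (ℓ k).eval x * (ℓ i).eval x ∂σ0 =
      if k = i then 1 else 0)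
    -- two solutions of the linear Fourier–Padé conditions with monic Q of degree N
    (Q Q' : Polynomial ℝ) (P P' : Fin m → Polynomial ℝ)
    (hQm : Q.Monic) (hQdeg : Q.natDegree = N)
    (hQ'm : Q'.Monic) (hQ'deg : Q'.natDegree = N)
    (hPdeg : ∀ j, (P j).degree < N) (hP'deg : ∀ j, (P' j).degree < N)
    (hQorth : ∀ j, ∀ k < N + n j,
      ∫ x, (Q.eval x * (∫ t, (x - t)⁻¹ ∂(σ j)) - (P j).eval x) * (ℓ k).eval x ∂σ0 = 0)
    (hQ'orth : ∀ j, ∀ k < N + n j,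
      ∫ x, (Q'.eval x * (∫ t, (x - t)⁻¹ ∂(σ j)) - (P' j).eval x) * (ℓ k).eval x ∂σ0 = 0)
    -- P is determined from Q by its Fourier coefficients
    (hPdef : ∀ j, P j = ∑ i ∈ Finset.range N,
      (∫ x, Q.eval x * (∫ t, (x - t)⁻¹ ∂(σ j)) * (ℓ i).eval x ∂σ0) • ℓ i)
    (hP'def : ∀ j, P' j = ∑ i ∈ Finset.range N,
      (∫ x, Q'.eval x * (∫ t, (x - t)⁻¹ ∂(σ j)) * (ℓ i).eval x ∂σ0) • ℓ i)
    -- every solution of the linear Fourier–Padé conditions has denominator of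
    -- exact degree N (proved in the paper via the Angelesco structure)
    (hfull : ∀ (Q2 : Polynomial ℝ) (P2 : Fin m → Polynomial ℝ), Q2 ≠ 0 →
      Q2.degree ≤ (N : ℕ) → (∀ j, (P2 j).degree < N) →
      (∀ j, ∀ k < N + n j,
        ∫ x, (Q2.eval x * (∫ t, (x - t)⁻¹ ∂(σ j)) - (P2 j).eval x) * (ℓ k).eval x ∂σ0 = 0) →
      Q2.natDegree = N) :
    Q = Q' ∧ ∀ j, P j = P' j := by
  obtain ⟨a, b, hab, hΔ0eq⟩ := hΔ0
  have hScomp : IsCompact Δ0 := hΔ0eq ▸ isCompact_Icc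
  -- integrability of all the relevant integrands
  have key : ∀ (R : Polynomial ℝ) (j : Fin m) (k : ℕ),
      Integrable (fun x => (R.eval x * ∫ t, (x - t)⁻¹ ∂(σ j)) * (ℓ k).eval x) σ0 := by
    intro R j k
    obtain ⟨c, d, hcd, hΔjeq⟩ := hΔ j
    obtain ⟨gap, hgap, hdist⟩ := gap_lemma hab hcd (hΔ0eq ▸ hΔjeq ▸ hd0 j)
    have := cauchy_int σ0 (σ j) Δ0 (Δ j) hσ0 (hσ j) hScomp
      (fun x => R.eval x * (ℓ k).eval x)
      ((R.continuous_aeval).mul ((ℓ k).continuous_aeval)) gap hgap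
      (by rw [hΔ0eq, hΔjeq]; exact hdist)
    refine this.congr (Filter.Eventually.of_forall fun x => ?_)
    ring
  have keyP : ∀ (R : Polynomial ℝ) (j : Fin m) (k : ℕ),
      Integrable (fun x => (R.eval x * ∫ t, (x - t)⁻¹ ∂(σ j) - (P j).eval x) * (ℓ k).eval x)
        σ0 := by
    intro R j k
    have h2 : Integrable (fun x => (P j).eval x * (ℓ k).eval x) σ0 :=
      cont_int σ0 Δ0 hσ0 hScomp _ (((P j).continuous_aeval).mul ((ℓ k).continuous_aeval))
    refine ((key R j k).sub h2).congr (Filter.Eventually.of_forall fun x => ?_)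
    simp only [Pi.sub_apply]; ring
  have keyP' : ∀ (R : Polynomial ℝ) (j : Fin m) (k : ℕ),
      Integrable (fun x => (R.eval x * ∫ t, (x - t)⁻¹ ∂(σ j) - (P' j).eval x) * (ℓ k).eval x)
        σ0 := by
    intro R j k
    have h2 : Integrable (fun x => (P' j).eval x * (ℓ k).eval x) σ0 :=
      cont_int σ0 Δ0 hσ0 hScomp _ (((P' j).continuous_aeval).mul ((ℓ k).continuous_aeval))
    refine ((key R j k).sub h2).congr (Filter.Eventually.of_forall fun x => ?_)
    simp only [Pi.sub_apply]; ring
  have hQQ' : Q = Q' := by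
    by_contra hne
    have hsub : Q - Q' ≠ 0 := sub_ne_zero.mpr hne
    have hdeg : (Q - Q').degree < (N : ℕ) := by
      have hdd' : Q.degree = Q'.degree := by
        rw [Polynomial.degree_eq_natDegree hQm.ne_zero,
          Polynomial.degree_eq_natDegree hQ'm.ne_zero, hQdeg, hQ'deg]
      have := Polynomial.degree_sub_lt hdd' hQm.ne_zero
        (by simp [hQm.leadingCoeff, hQ'm.leadingCoeff])
      rwa [Polynomial.degree_eq_natDegree hQm.ne_zero, hQdeg] at this
    have horth2 : ∀ j, ∀ k < N + n j,
        ∫ x, ((Q - Q').eval x * (∫ t, (x - t)⁻¹ ∂(σ j)) - (P j - P' j).eval x) *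
          (ℓ k).eval x ∂σ0 = 0 := by
      intro j k hk
      have heq : (fun x => ((Q - Q').eval x * (∫ t, (x - t)⁻¹ ∂(σ j)) -
          (P j - P' j).eval x) * (ℓ k).eval x) =
          fun x => (Q.eval x * (∫ t, (x - t)⁻¹ ∂(σ j)) - (P j).eval x) * (ℓ k).eval x -
            (Q'.eval x * (∫ t, (x - t)⁻¹ ∂(σ j)) - (P' j).eval x) * (ℓ k).eval x := by
        funext x
        simp only [Polynomial.eval_sub]
        ring
      rw [heq, integral_sub (keyP Q j k) (keyP' Q' j k), hQorth j k hk, hQ'orth j k hk,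
        sub_zero]
    have hN' := hfull (Q - Q') (fun j => P j - P' j) hsub hdeg.le
      (fun j => lt_of_le_of_lt (Polynomial.degree_sub_le _ _)
        (max_lt (hPdeg j) (hP'deg j))) horth2
    rw [← hN', Polynomial.degree_eq_natDegree hsub] at hdeg
    exact lt_irrefl _ (Nat.cast_lt.mp hdeg)
  refine ⟨hQQ', fun j => ?_⟩
  rw [hPdef j, hP'def j, hQQ']
end
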